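/- arXiv:2203.02815 — 3 statements merged into one kernel-verified Lean document; each statement's English description precedes it below -/
import Mathlib

section
/- In every gadget solution of the wire gadget, the bottom optional area (row 0) is covered by the gadget's assigned area if and only if the top optional area (row 2) is not covered. -/
/-- A cell of the integer grid. -/
abbrev Cell : Type := ℤ × ℤ

/-- Two cells are edge-adjacent. -/
def CellAdj (a b : Cell) : Prop :=
  (a.1 - b.1).natAbs + (a.2 - b.2).natAbs = 1

/-- A set of cells is edge-connected (within itself). -/
def ConnectedIn (S : Set Cell) : Prop :=
  ∀ a ∈ S, ∀ b ∈ S,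
    Relation.ReflTransGen (fun x y : Cell => x ∈ S ∧ y ∈ S ∧ CellAdj x y) a b

/-- A map of the grid composed of translations, rotations and reflections
    (an integer isometry given by an orthogonal integer matrix plus a translation). -/
def IsGridIsometry (f : Cell → Cell) : Prop :=
  ∃ a b c d e g : ℤ,
    a * a + b * b = 1 ∧ c * c + d * d = 1 ∧ a * c + b * d = 0 ∧
    ∀ p : Cell, f p = (a * p.1 + b * p.2 + e, c * p.1 + d * p.2 + g)

/-- Two sets of cells are congruent: equal up to translation, rotation and reflection. -/
def CongruentCells (A B : Set Cell) : Prop :=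
  ∃ f : Cell → Cell, IsGridIsometry f ∧ f '' A = B

/-- A (coloring and clue assignment of a) Double Choco board:
    each cell is white (`true`) or gray (`false`), and may carry a clue. -/
structure Board where
  white : Cell → Bool
  clue : Cell → Option ℕ

/-- The white cells of a set. -/
def Board.whitePart (bd : Board) (B : Set Cell) : Set Cell := {p ∈ B | bd.white p = true}

/-- The gray cells of a set. -/
def Board.grayPart (bd : Board) (B : Set Cell) : Set Cell := {p ∈ B | bd.white p = false}

/-- A valid Double Choco block: a finite edge-connected set of cells whose white part and
    gray part are nonempty, edge-connected, and congruent (hence of equal size), and such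
    that any clue `n` carried by a cell of the block forces the white part and the gray
    part to have exactly `n` cells each. -/
def ValidBlock (bd : Board) (B : Set Cell) : Prop :=
  B.Finite ∧ ConnectedIn B ∧
  (bd.whitePart B).Nonempty ∧ (bd.grayPart B).Nonempty ∧
  ConnectedIn (bd.whitePart B) ∧ ConnectedIn (bd.grayPart B) ∧
  CongruentCells (bd.whitePart B) (bd.grayPart B) ∧
  ∀ p ∈ B, ∀ n : ℕ, bd.clue p = some n →
    (bd.whitePart B).ncard = n ∧ (bd.grayPart B).ncard = n

/-- A partition of `area` into pairwise disjoint valid blocks. -/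
def IsBlockPartition (bd : Board) (blocks : Set (Set Cell)) (area : Set Cell) : Prop :=
  (∀ B ∈ blocks, ValidBlock bd B) ∧
  blocks.PairwiseDisjoint id ∧
  ⋃₀ blocks = area

/-- A gadget: a board together with a mandatory area and a collection of optional areas. -/
structure Gadget where
  board : Board
  mandatory : Set Cell
  optionals : Set (Set Cell)

/-- The entire area of a gadget. -/
def Gadget.area (G : Gadget) : Set Cell := G.mandatory ∪ ⋃₀ G.optionals

/-- A gadget solution: a partition into valid blocks of an assigned area containing the
    mandatory area, contained in the gadget, that fully covers or fully avoids each
    optional area. -/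
def IsGadgetSolution (G : Gadget) (area : Set Cell) (blocks : Set (Set Cell)) : Prop :=
  G.mandatory ⊆ area ∧ area ⊆ G.area ∧
  (∀ O ∈ G.optionals, O ⊆ area ∨ Disjoint O area) ∧
  IsBlockPartition G.board blocks area

/-- Row `j` of the (two cells wide) wire: cells `(0, j)` and `(1, j)`. -/
def wireRow (j : ℤ) : Set Cell := {((0 : ℤ), j), ((1 : ℤ), j)}

/-- The board of the wire gadget: column 0 is white, column 1 is gray,
    every cell carries the clue 2. -/
def wireBoard : Board where
  white := fun p => decide (p.1 = 0)
  clue := fun _ => some 2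

/-- The wire gadget: cells `{0,1} × {0,1,2}`; the middle row is mandatory,
    the bottom and top rows are the two optional areas. -/
def wireGadget : Gadget where
  board := wireBoard
  mandatory := wireRow 1
  optionals := {wireRow 0, wireRow 2}

/-- The six cells of the wire gadget. -/
def wireS6 : Set Cell :=
  {((0:ℤ),(0:ℤ)), ((1:ℤ),(0:ℤ)), ((0:ℤ),(1:ℤ)), ((1:ℤ),(1:ℤ)), ((0:ℤ),(2:ℤ)), ((1:ℤ),(2:ℤ))}

lemma wireS6_finite : wireS6.Finite := by
  unfold wireS6
  exact (Set.finite_singleton _).insert _ |>.insert _ |>.insert _ |>.insert _ |>.insert _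

lemma wireS6_ncard : wireS6.ncard = 6 := by
  have : wireS6 = (↑({((0:ℤ),(0:ℤ)), ((1:ℤ),(0:ℤ)), ((0:ℤ),(1:ℤ)), ((1:ℤ),(1:ℤ)),
      ((0:ℤ),(2:ℤ)), ((1:ℤ),(2:ℤ))} : Finset Cell) : Set Cell) := by
    simp [wireS6]
  rw [this, Set.ncard_coe_finset]
  decide

lemma wireArea_eq : wireGadget.area = wireS6 := by
  ext p
  simp only [Gadget.area, wireGadget, wireRow, wireS6, Set.sUnion_insert, Set.sUnion_singleton,
    Set.mem_union, Set.mem_insert_iff, Set.mem_singleton_iff]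
  tauto

lemma wire_block_card {area : Set Cell} {blocks : Set (Set Cell)}
    (h : IsGadgetSolution wireGadget area blocks)
    {B : Set Cell} (hB : B ∈ blocks) : B.Finite ∧ B.ncard = 4 := by
  obtain ⟨-, -, -, hvalid, hdisj, hcover⟩ := h
  obtain ⟨hfin, -, ⟨p, hpw⟩, -, -, -, -, hclue⟩ := hvalid B hB
  have hpB : p ∈ B := hpw.1
  have hclue2 := hclue p hpB 2 rfl
  have hsplit : B = wireBoard.whitePart B ∪ wireBoard.grayPart B := by
    ext q
    simp only [Board.whitePart, Board.grayPart, Set.mem_union, Set.mem_setOf_eq]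
    cases hq : wireBoard.white q <;> simp [hq]
  have hd : Disjoint (wireBoard.whitePart B) (wireBoard.grayPart B) := by
    rw [Set.disjoint_left]
    rintro q ⟨-, hq1⟩ ⟨-, hq2⟩
    rw [hq1] at hq2; simp at hq2
  refine ⟨hfin, ?_⟩
  have hwf : (wireBoard.whitePart B).Finite := hfin.subset (fun q hq => hq.1)
  have hgf : (wireBoard.grayPart B).Finite := hfin.subset (fun q hq => hq.1)
  rw [hsplit, Set.ncard_union_eq hd hwf hgf]
  have h1 : (wireBoard.whitePart B).ncard = 2 := hclue2.1
  have h2 : (wireBoard.grayPart B).ncard = 2 := hclue2.2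
  omega

/-- In every gadget solution of the wire gadget, the bottom optional area (row 0) is
    covered by the gadget's assigned area if and only if the top optional area (row 2)
    is not covered. -/
theorem wire_bottom_covered_iff_top_uncovered
    (area : Set Cell) (blocks : Set (Set Cell))
    (h : IsGadgetSolution wireGadget area blocks) :
    wireRow 0 ⊆ area ↔ ¬ wireRow 2 ⊆ area := by
  obtain ⟨hman, hsub, hopt, hpart⟩ := h
  have h' : IsGadgetSolution wireGadget area blocks := ⟨hman, hsub, hopt, hpart⟩
  obtain ⟨hvalid, hdisj, hcover⟩ := hpart
  have hareaS6 : area ⊆ wireS6 := wireArea_eq ▸ hsub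
  have hareaFin : area.Finite := wireS6_finite.subset hareaS6
  -- the block containing (0,1)
  have hmem : ((0:ℤ),(1:ℤ)) ∈ area := hman (by left; rfl)
  rw [← hcover] at hmem
  obtain ⟨B, hB, hpB⟩ := hmem
  have hBsub : B ⊆ area := hcover ▸ (fun x hx => ⟨B, hB, hx⟩)
  obtain ⟨hBfin, hBcard⟩ := wire_block_card h' hB
  -- optional area conditions
  have hopt0 := hopt (wireRow 0) (by left; rfl)
  have hopt2 := hopt (wireRow 2) (by right; rfl)
  -- not both covered
  have hnotboth : ¬ (wireRow 0 ⊆ area ∧ wireRow 2 ⊆ area) := by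
    rintro ⟨h0, h2⟩
    have hS6area : wireS6 ⊆ area := by
      intro p hp
      rcases hp with hp | hp | hp | hp | hp | hp
      · exact h0 (by subst hp; left; rfl)
      · exact h0 (by subst hp; right; rfl)
      · exact hman (by subst hp; left; rfl)
      · exact hman (by subst hp; right; rfl)
      · exact h2 (by subst hp; left; rfl)
      · exact h2 (by subst hp; right; rfl)
    -- find a cell of wireS6 not in B
    have hne : ¬ wireS6 ⊆ B := by
      intro hc
      have := Set.ncard_le_ncard hc hBfin
      rw [wireS6_ncard, hBcard] at this
      omega
    obtain ⟨x, hxS6, hxB⟩ := Set.not_subset.mp hne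
    have hxarea : x ∈ area := hS6area hxS6
    rw [← hcover] at hxarea
    obtain ⟨B', hB', hxB'⟩ := hxarea
    have hBne : B' ≠ B := fun e => hxB (e ▸ hxB')
    obtain ⟨hB'fin, hB'card⟩ := wire_block_card h' hB'
    have hdisjBB : Disjoint B B' := hdisj hB hB' (Ne.symm hBne)
    have hun : B ∪ B' ⊆ area := Set.union_subset hBsub (hcover ▸ (fun x hx => ⟨B', hB', hx⟩))
    have hle : (B ∪ B').ncard ≤ area.ncard := Set.ncard_le_ncard hun hareaFin
    have hle2 : area.ncard ≤ wireS6.ncard := Set.ncard_le_ncard hareaS6 wireS6_finite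
    rw [Set.ncard_union_eq hdisjBB hBfin hB'fin, hBcard, hB'card] at hle
    rw [wireS6_ncard] at hle2
    omega
  -- not both uncovered
  have hnotneither : ¬ (Disjoint (wireRow 0) area ∧ Disjoint (wireRow 2) area) := by
    rintro ⟨h0, h2⟩
    have harea1 : area ⊆ wireRow 1 := by
      intro p hp
      have hp6 := hareaS6 hp
      rcases hp6 with hp6 | hp6 | hp6 | hp6 | hp6 | hp6
      · exact absurd hp (Set.disjoint_left.mp h0 (by subst hp6; left; rfl))
      · exact absurd hp (Set.disjoint_left.mp h0 (by subst hp6; right; rfl))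
      · left; exact hp6
      · right; exact hp6
      · exact absurd hp (Set.disjoint_left.mp h2 (by subst hp6; left; rfl))
      · exact absurd hp (Set.disjoint_left.mp h2 (by subst hp6; right; rfl))
    have hB1 : B ⊆ wireRow 1 := fun x hx => harea1 (hBsub hx)
    have : B.ncard ≤ (wireRow 1).ncard :=
      Set.ncard_le_ncard hB1 ((Set.finite_singleton _).insert _)
    have hrow : (wireRow 1).ncard ≤ 2 := by
      have := Set.ncard_insert_le ((0:ℤ),(1:ℤ)) ({((1:ℤ),(1:ℤ))} : Set Cell)
      rw [Set.ncard_singleton] at this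
      exact this
    omega
  constructor
  · intro h0 h2
    exact hnotboth ⟨h0, h2⟩
  · intro h2
    rcases hopt0 with h0 | h0
    · exact h0
    · rcases hopt2 with h2' | h2'
      · exact absurd h2' h2
      · exact absurd ⟨h0, h2'⟩ hnotneither
end

section
/- The wire gadget has exactly two gadget solutions: the single 2×2 block consisting of rows 0 and 1 (covering the bottom optional area and not the top one), and the single 2×2 block consisting of rows 1 and 2 (covering the top optional area and not the bottom one). -/
section Aux

lemma mem_wireRow {p : Cell} {j : ℤ} : p ∈ wireRow j ↔ p = (0, j) ∨ p = (1, j) := by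
  simp [wireRow]

lemma cellAdj_symm {a b : Cell} (h : CellAdj a b) : CellAdj b a := by
  unfold CellAdj at *; omega

lemma whitePart_twoRows (j : ℤ) :
    wireBoard.whitePart (wireRow j ∪ wireRow (j + 1)) = {((0:ℤ), j), ((0:ℤ), j + 1)} := by
  ext p
  simp only [Board.whitePart, wireBoard, Set.mem_union, mem_wireRow, Set.mem_setOf_eq,
    decide_eq_true_eq, Set.mem_insert_iff, Set.mem_singleton_iff]
  constructor
  · rintro ⟨(h | h) | (h | h), hw⟩ <;> subst h <;> simp_all
  · rintro (h | h) <;> subst h <;> simp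

lemma grayPart_twoRows (j : ℤ) :
    wireBoard.grayPart (wireRow j ∪ wireRow (j + 1)) = {((1:ℤ), j), ((1:ℤ), j + 1)} := by
  ext p
  simp only [Board.grayPart, wireBoard, Set.mem_union, mem_wireRow, Set.mem_setOf_eq,
    decide_eq_false_iff_not, Set.mem_insert_iff, Set.mem_singleton_iff]
  constructor
  · rintro ⟨(h | h) | (h | h), hw⟩ <;> subst h <;> simp_all
  · rintro (h | h) <;> subst h <;> simp

lemma connected_pair {a b : Cell} (h : CellAdj a b) : ConnectedIn {a, b} := by
  have ha : a ∈ ({a, b} : Set Cell) := by simp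
  have hb : b ∈ ({a, b} : Set Cell) := by simp
  have hab : Relation.ReflTransGen
      (fun x y : Cell => x ∈ ({a, b} : Set Cell) ∧ y ∈ ({a, b} : Set Cell) ∧ CellAdj x y) a b :=
    Relation.ReflTransGen.single ⟨ha, hb, h⟩
  have hba : Relation.ReflTransGen
      (fun x y : Cell => x ∈ ({a, b} : Set Cell) ∧ y ∈ ({a, b} : Set Cell) ∧ CellAdj x y) b a :=
    Relation.ReflTransGen.single ⟨hb, ha, cellAdj_symm h⟩
  rintro x (rfl | rfl) y (rfl | rfl)
  · exact .refl
  · exact hab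
  · exact hba
  · exact .refl

lemma adj_horiz (j : ℤ) : CellAdj ((0 : ℤ), j) ((1 : ℤ), j) := by
  simp [CellAdj]

lemma adj_vert (i j : ℤ) : CellAdj ((i : ℤ), j) (i, j + 1) := by
  simp [CellAdj]

lemma validBlock_twoRows (j : ℤ) :
    ValidBlock wireBoard (wireRow j ∪ wireRow (j + 1)) := by
  have hD : (wireRow j ∪ wireRow (j + 1) : Set Cell)
      = {((0:ℤ), j), ((1:ℤ), j), ((0:ℤ), j+1), ((1:ℤ), j+1)} := by
    ext p; simp [wireRow]; tauto
  refine ⟨?_, ?_, ?_, ?_, ?_, ?_, ?_, ?_⟩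
  · rw [hD]; exact (Set.finite_singleton _).insert _ |>.insert _ |>.insert _
  · -- connectivity of the 2x2 block
    rw [hD]
    set S : Set Cell := {((0:ℤ), j), ((1:ℤ), j), ((0:ℤ), j+1), ((1:ℤ), j+1)} with hS
    set r : Cell → Cell → Prop := fun x y => x ∈ S ∧ y ∈ S ∧ CellAdj x y with hr
    have hsym : Symmetric r := fun x y ⟨hx, hy, h⟩ => ⟨hy, hx, cellAdj_symm h⟩
    have base : ∀ p ∈ S, Relation.ReflTransGen r p ((0:ℤ), j) := by
      have m0 : ((0:ℤ), j) ∈ S := by simp [hS]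
      have m1 : ((1:ℤ), j) ∈ S := by simp [hS]
      have m2 : ((0:ℤ), j+1) ∈ S := by simp [hS]
      have m3 : ((1:ℤ), j+1) ∈ S := by simp [hS]
      rintro p (rfl | rfl | rfl | rfl)
      · exact .refl
      · exact .single ⟨m1, m0, cellAdj_symm (adj_horiz j)⟩
      · exact .single ⟨m2, m0, cellAdj_symm (adj_vert 0 j)⟩
      · exact .tail (.single ⟨m3, m1, cellAdj_symm (adj_vert 1 j)⟩) ⟨m1, m0, cellAdj_symm (adj_horiz j)⟩
    intro a ha b hb
    exact (base a ha).trans ((haveI : Std.Symm r := ⟨fun _ _ h => hsym h⟩; Relation.ReflTransGen.symmetric (r := r)).symm _ _ (base b hb))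
  · rw [whitePart_twoRows]; exact ⟨((0:ℤ), j), by simp⟩
  · rw [grayPart_twoRows]; exact ⟨((1:ℤ), j), by simp⟩
  · rw [whitePart_twoRows]; exact connected_pair (adj_vert 0 j)
  · rw [grayPart_twoRows]; exact connected_pair (adj_vert 1 j)
  · rw [whitePart_twoRows, grayPart_twoRows]
    refine ⟨fun p => (p.1 + 1, p.2), ⟨1, 0, 0, 1, 1, 0, by norm_num, by norm_num, by norm_num,
      fun p => by simp⟩, ?_⟩
    rw [Set.image_pair]
    norm_num
  · intro p _ n hn
    simp only [wireBoard] at hn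
    obtain rfl : n = 2 := by injection hn; omega
    rw [whitePart_twoRows, grayPart_twoRows]
    constructor <;> exact Set.ncard_pair (by simp)

end Aux

lemma mem_whitePart {B : Set Cell} {p : Cell} :
    p ∈ wireBoard.whitePart B ↔ p ∈ B ∧ p.1 = 0 := by
  simp [Board.whitePart, wireBoard]

lemma mem_grayPart {B : Set Cell} {p : Cell} :
    p ∈ wireBoard.grayPart B ↔ p ∈ B ∧ p.1 ≠ 0 := by
  simp [Board.grayPart, wireBoard]

lemma ncard_triple : ({((0:ℤ),(0:ℤ)), ((0:ℤ),(1:ℤ)), ((0:ℤ),(2:ℤ))} : Set Cell).ncard = 3 := by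
  rw [Set.ncard_insert_of_notMem (by norm_num [Prod.ext_iff])
    ((Set.finite_singleton _).insert _), Set.ncard_pair (by norm_num [Prod.ext_iff])]

lemma row01 : wireRow 0 ∪ wireRow 1 = wireRow 0 ∪ wireRow (0 + 1) := by norm_num

lemma row12 : wireRow 1 ∪ wireRow 2 = wireRow 1 ∪ wireRow (1 + 1) := by norm_num


/-- The wire gadget has exactly two gadget solutions: the single 2×2 block consisting of
    rows 0 and 1 (covering the bottom optional area and not the top one), and the single
    2×2 block consisting of rows 1 and 2 (covering the top optional area and not the
    bottom one). -/
theorem wire_profile_table_sufficient (area : Set Cell) (blocks : Set (Set Cell)) :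
    IsGadgetSolution wireGadget area blocks ↔
      (area = wireRow 0 ∪ wireRow 1 ∧ blocks = {wireRow 0 ∪ wireRow 1}) ∨
      (area = wireRow 1 ∪ wireRow 2 ∧ blocks = {wireRow 1 ∪ wireRow 2}) := by
  constructor
  · rintro ⟨hm, ha, hopt, hvalid, hdisj, huni⟩
    have ha' : area ⊆ wireRow 0 ∪ wireRow 1 ∪ wireRow 2 := by
      intro p hp
      have := ha hp
      simp only [Gadget.area, wireGadget, Set.sUnion_insert, Set.sUnion_singleton,
        Set.mem_union] at this ⊢
      tauto
    have hBsub : ∀ B ∈ blocks, B ⊆ area := fun B hB x hx =>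
      huni ▸ Set.mem_sUnion.mpr ⟨B, hB, hx⟩
    have hcard : ∀ B ∈ blocks,
        (wireBoard.whitePart B).ncard = 2 ∧ (wireBoard.grayPart B).ncard = 2 := by
      intro B hB
      obtain ⟨_, _, ⟨p, hp⟩, _, _, _, _, hclue⟩ := hvalid B hB
      exact hclue p hp.1 2 rfl
    have hfin : ∀ B ∈ blocks, B.Finite := fun B hB => (hvalid B hB).1
    have small : ∀ B ∈ blocks, ∀ w : Cell, wireBoard.whitePart B ⊆ {w} → False := by
      intro B hB w hsub
      have h2 := (hcard B hB).1
      have := Set.ncard_le_ncard hsub (Set.finite_singleton w)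
      rw [h2, Set.ncard_singleton] at this
      omega
    have hO0 := hopt (wireRow 0) (Set.mem_insert _ _)
    have hO2 := hopt (wireRow 2) (Set.mem_insert_of_mem _ rfl)
    have h01mem : ((0:ℤ),(1:ℤ)) ∈ area := hm (mem_wireRow.mpr (Or.inl rfl))
    obtain ⟨B, hB, hmem⟩ := Set.mem_sUnion.mp (huni ▸ h01mem)
    rcases hO0 with h0 | h0 <;> rcases hO2 with h2 | h2
    · -- both optional rows present: impossible
      exfalso
      have harea : area = wireRow 0 ∪ wireRow 1 ∪ wireRow 2 :=
        subset_antisymm ha' (Set.union_subset (Set.union_subset h0 hm) h2)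
      have hwsub : ∀ B' ∈ blocks, wireBoard.whitePart B'
          ⊆ {((0:ℤ),(0:ℤ)), ((0:ℤ),(1:ℤ)), ((0:ℤ),(2:ℤ))} := by
        intro B' hB' p hp
        obtain ⟨hpB, hp0⟩ := mem_whitePart.mp hp
        have := harea ▸ hBsub B' hB' hpB
        simp only [Set.mem_union, mem_wireRow] at this
        rcases this with ((h|h)|(h|h))|(h|h) <;> subst h <;> simp_all
      have h01w : ((0:ℤ),(1:ℤ)) ∈ wireBoard.whitePart B := mem_whitePart.mpr ⟨hmem, rfl⟩
      have wfin : (wireBoard.whitePart B).Finite :=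
        (hfin B hB).subset (fun p hp => (mem_whitePart.mp hp).1)
      have hnotboth : ¬ (((0:ℤ),(0:ℤ)) ∈ wireBoard.whitePart B ∧
          ((0:ℤ),(2:ℤ)) ∈ wireBoard.whitePart B) := by
        rintro ⟨ha0, ha2⟩
        have hsub : ({((0:ℤ),(0:ℤ)), ((0:ℤ),(1:ℤ)), ((0:ℤ),(2:ℤ))} : Set Cell)
            ⊆ wireBoard.whitePart B := by
          intro p hp
          rcases hp with h | h | h
          · exact h ▸ ha0
          · exact h ▸ h01w
          · exact h ▸ ha2
        have := Set.ncard_le_ncard hsub wfin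
        rw [ncard_triple, (hcard B hB).1] at this
        omega
      have finish : ∀ w a b : Cell, w ∈ area → w ∉ B → a ∈ B → b ∈ B →
          (∀ p ∈ ({((0:ℤ),(0:ℤ)), ((0:ℤ),(1:ℤ)), ((0:ℤ),(2:ℤ))} : Set Cell),
            p = w ∨ p = a ∨ p = b) → False := by
        intro w a b hwarea hwB haB hbB hcases
        obtain ⟨B', hB', hw'⟩ := Set.mem_sUnion.mp (huni ▸ hwarea)
        have hne : B' ≠ B := by rintro rfl; exact hwB hw'
        have hd := hdisj hB' hB hne
        refine small B' hB' w ?_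
        intro p hp
        have hpT := hwsub B' hB' hp
        have hpB' := (mem_whitePart.mp hp).1
        have hpnotB : p ∉ B := Set.disjoint_left.mp hd hpB'
        simp only [Set.mem_singleton_iff]
        rcases hcases p hpT with h | h | h
        · exact h
        · exact absurd haB (h ▸ hpnotB)
        · exact absurd hbB (h ▸ hpnotB)
      by_cases h00 : ((0:ℤ),(0:ℤ)) ∈ wireBoard.whitePart B
      · have h02 : ((0:ℤ),(2:ℤ)) ∉ B := by
          intro h
          exact hnotboth ⟨h00, mem_whitePart.mpr ⟨h, rfl⟩⟩
        refine finish ((0:ℤ),(2:ℤ)) ((0:ℤ),(0:ℤ)) ((0:ℤ),(1:ℤ)) ?_ h02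
          (mem_whitePart.mp h00).1 hmem ?_
        · rw [harea]
          exact Set.mem_union_right _ (mem_wireRow.mpr (Or.inl rfl))
        · intro p hp
          rcases hp with h | h | h
          exacts [Or.inr (Or.inl h), Or.inr (Or.inr h), Or.inl h]
      · have hsub2 : wireBoard.whitePart B ⊆ {((0:ℤ),(1:ℤ)), ((0:ℤ),(2:ℤ))} := by
          intro p hp
          rcases hwsub B hB hp with h | h | h
          · exact absurd (h ▸ hp) h00
          · exact Or.inl h
          · exact Or.inr h
        have heq := Set.eq_of_subset_of_ncard_le hsub2
          (by rw [(hcard B hB).1, Set.ncard_pair (by norm_num [Prod.ext_iff])])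
          ((Set.finite_singleton _).insert _)
        have h02B : ((0:ℤ),(2:ℤ)) ∈ B :=
          (mem_whitePart.mp (heq ▸ (Set.mem_insert_of_mem _ rfl))).1
        have h00B : ((0:ℤ),(0:ℤ)) ∉ B := fun h => h00 (mem_whitePart.mpr ⟨h, rfl⟩)
        refine finish ((0:ℤ),(0:ℤ)) ((0:ℤ),(1:ℤ)) ((0:ℤ),(2:ℤ)) ?_ h00B hmem h02B ?_
        · rw [harea]
          exact Set.mem_union_left _ (Set.mem_union_left _ (mem_wireRow.mpr (Or.inl rfl)))
        · intro p hp
          rcases hp with h | h | h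
          exacts [Or.inl h, Or.inr (Or.inl h), Or.inr (Or.inr h)]
    · -- row0 present, row2 absent
      left
      have harea : area = wireRow 0 ∪ wireRow 1 := by
        refine subset_antisymm ?_ (Set.union_subset h0 hm)
        intro p hp
        rcases ha' hp with h | h
        · exact h
        · exact absurd h (Set.disjoint_right.mp h2 hp)
      have hWsub : wireBoard.whitePart B ⊆ {((0:ℤ),(0:ℤ)), ((0:ℤ),(1:ℤ))} := by
        intro p hp
        obtain ⟨hpB, hp0⟩ := mem_whitePart.mp hp
        have := harea ▸ hBsub B hB hpB
        simp only [Set.mem_union, mem_wireRow] at this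
        rcases this with (h|h)|(h|h) <;> subst h <;> simp_all
      have hGsub : wireBoard.grayPart B ⊆ {((1:ℤ),(0:ℤ)), ((1:ℤ),(1:ℤ))} := by
        intro p hp
        obtain ⟨hpB, hp0⟩ := mem_grayPart.mp hp
        have := harea ▸ hBsub B hB hpB
        simp only [Set.mem_union, mem_wireRow] at this
        rcases this with (h|h)|(h|h) <;> subst h <;> simp_all
      have hW := Set.eq_of_subset_of_ncard_le hWsub
        (by rw [(hcard B hB).1, Set.ncard_pair (by norm_num [Prod.ext_iff])])
        ((Set.finite_singleton _).insert _)
      have hG := Set.eq_of_subset_of_ncard_le hGsub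
        (by rw [(hcard B hB).2, Set.ncard_pair (by norm_num [Prod.ext_iff])])
        ((Set.finite_singleton _).insert _)
      have hBeq : B = wireRow 0 ∪ wireRow 1 := by
        refine subset_antisymm (harea ▸ hBsub B hB) ?_
        intro p hp
        simp only [Set.mem_union, mem_wireRow] at hp
        rcases hp with (h|h)|(h|h) <;> subst h
        · exact (mem_whitePart.mp (hW ▸ (Set.mem_insert _ _))).1
        · exact (mem_grayPart.mp (hG ▸ (Set.mem_insert _ _))).1
        · exact (mem_whitePart.mp (hW ▸ (Set.mem_insert_of_mem _ rfl))).1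
        · exact (mem_grayPart.mp (hG ▸ (Set.mem_insert_of_mem _ rfl))).1
      refine ⟨harea, ?_⟩
      ext B'
      simp only [Set.mem_singleton_iff]
      constructor
      · intro hB'
        by_contra hne'
        have hne : B' ≠ B := fun h => hne' (h.trans hBeq)
        have hd := hdisj hB' hB hne
        obtain ⟨_, _, ⟨p, hp⟩, _⟩ := hvalid B' hB'
        have hpB' := (mem_whitePart.mp hp).1
        have hpB : p ∈ B := hBeq ▸ (harea ▸ hBsub B' hB' hpB')
        exact Set.disjoint_left.mp hd hpB' hpB
      · rintro rfl
        exact hBeq ▸ hB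
    · -- row0 absent, row2 present
      right
      have harea : area = wireRow 1 ∪ wireRow 2 := by
        refine subset_antisymm ?_ (Set.union_subset hm h2)
        intro p hp
        rcases ha' hp with (h | h) | h
        · exact absurd h (Set.disjoint_right.mp h0 hp)
        · exact Set.mem_union_left _ h
        · exact Set.mem_union_right _ h
      have hWsub : wireBoard.whitePart B ⊆ {((0:ℤ),(1:ℤ)), ((0:ℤ),(2:ℤ))} := by
        intro p hp
        obtain ⟨hpB, hp0⟩ := mem_whitePart.mp hp
        have := harea ▸ hBsub B hB hpB
        simp only [Set.mem_union, mem_wireRow] at this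
        rcases this with (h|h)|(h|h) <;> subst h <;> simp_all
      have hGsub : wireBoard.grayPart B ⊆ {((1:ℤ),(1:ℤ)), ((1:ℤ),(2:ℤ))} := by
        intro p hp
        obtain ⟨hpB, hp0⟩ := mem_grayPart.mp hp
        have := harea ▸ hBsub B hB hpB
        simp only [Set.mem_union, mem_wireRow] at this
        rcases this with (h|h)|(h|h) <;> subst h <;> simp_all
      have hW := Set.eq_of_subset_of_ncard_le hWsub
        (by rw [(hcard B hB).1, Set.ncard_pair (by norm_num [Prod.ext_iff])])
        ((Set.finite_singleton _).insert _)
      have hG := Set.eq_of_subset_of_ncard_le hGsub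
        (by rw [(hcard B hB).2, Set.ncard_pair (by norm_num [Prod.ext_iff])])
        ((Set.finite_singleton _).insert _)
      have hBeq : B = wireRow 1 ∪ wireRow 2 := by
        refine subset_antisymm (harea ▸ hBsub B hB) ?_
        intro p hp
        simp only [Set.mem_union, mem_wireRow] at hp
        rcases hp with (h|h)|(h|h) <;> subst h
        · exact (mem_whitePart.mp (hW ▸ (Set.mem_insert _ _))).1
        · exact (mem_grayPart.mp (hG ▸ (Set.mem_insert _ _))).1
        · exact (mem_whitePart.mp (hW ▸ (Set.mem_insert_of_mem _ rfl))).1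
        · exact (mem_grayPart.mp (hG ▸ (Set.mem_insert_of_mem _ rfl))).1
      refine ⟨harea, ?_⟩
      ext B'
      simp only [Set.mem_singleton_iff]
      constructor
      · intro hB'
        by_contra hne'
        have hne : B' ≠ B := fun h => hne' (h.trans hBeq)
        have hd := hdisj hB' hB hne
        obtain ⟨_, _, ⟨p, hp⟩, _⟩ := hvalid B' hB'
        have hpB' := (mem_whitePart.mp hp).1
        have hpB : p ∈ B := hBeq ▸ (harea ▸ hBsub B' hB' hpB')
        exact Set.disjoint_left.mp hd hpB' hpB
      · rintro rfl
        exact hBeq ▸ hB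
    · -- both absent: impossible
      exfalso
      refine small B hB ((0:ℤ),(1:ℤ)) ?_
      intro p hp
      obtain ⟨hpB, hp0⟩ := mem_whitePart.mp hp
      have hparea := hBsub B hB hpB
      have hp3 := ha' hparea
      have hn0 : p ∉ wireRow 0 := Set.disjoint_right.mp h0 hparea
      have hn2 : p ∉ wireRow 2 := Set.disjoint_right.mp h2 hparea
      simp only [Set.mem_union] at hp3
      rcases hp3 with (h | h) | h
      · exact absurd h hn0
      · rcases mem_wireRow.mp h with h | h <;> subst h <;> simp_all
      · exact absurd h hn2
  · rintro (⟨rfl, rfl⟩ | ⟨rfl, rfl⟩)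
    · refine ⟨Set.subset_union_right, ?_, ?_, ?_, ?_, ?_⟩
      · intro p hp
        simp only [Gadget.area, wireGadget, Set.sUnion_insert, Set.sUnion_singleton,
          Set.mem_union] at hp ⊢
        tauto
      · rintro O (rfl | rfl)
        · exact Or.inl Set.subset_union_left
        · refine Or.inr (Set.disjoint_left.mpr ?_)
          rintro p hp hp'
          simp only [Set.mem_union, mem_wireRow] at hp hp'
          rcases hp with h | h <;> subst h <;>
            simp only [Prod.mk.injEq] at hp' <;> omega
      · rintro B rfl
        exact row01 ▸ validBlock_twoRows 0
      · exact Set.pairwiseDisjoint_singleton _ _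
      · exact Set.sUnion_singleton _
    · refine ⟨Set.subset_union_left, ?_, ?_, ?_, ?_, ?_⟩
      · intro p hp
        simp only [Gadget.area, wireGadget, Set.sUnion_insert, Set.sUnion_singleton,
          Set.mem_union] at hp ⊢
        tauto
      · rintro O (rfl | rfl)
        · refine Or.inr (Set.disjoint_left.mpr ?_)
          rintro p hp hp'
          simp only [Set.mem_union, mem_wireRow] at hp hp'
          rcases hp with h | h <;> subst h <;>
            simp only [Prod.mk.injEq] at hp' <;> omega
        · exact Or.inl Set.subset_union_right
      · rintro B rfl
        exact row12 ▸ validBlock_twoRows 1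
      · exact Set.pairwiseDisjoint_singleton _ _
      · exact Set.sUnion_singleton _
end

section
/- The wire boundary gadget admits a gadget solution that covers its optional area and also admits a gadget solution that does not cover its optional area; hence the wire boundary gadget does not enforce the value of the wire it starts or terminates. -/
/-- The board of the wire boundary gadget: column 0 is white, column 1 is gray,
    the cells of rows 0 and 1 carry the clue 2 while the cells of row 2 carry no clue. -/
def wbBoard : Board where
  white := fun p => decide (p.1 = 0)
  clue := fun p => if p.2 = 2 then none else some 2

/-- The wire boundary gadget: cells `{0,1} × {0,1,2}`; rows 0 and 1 form the mandatory
    area and row 2 is the single optional area. -/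
def wbGadget : Gadget where
  board := wbBoard
  mandatory := wireRow 0 ∪ wireRow 1
  optionals := {wireRow 2}


/-- Auxiliary: adjacency is symmetric. -/
lemma cellAdj_symm_s4 {x y : Cell} (h : CellAdj x y) : CellAdj y x := by
  unfold CellAdj at *; omega

lemma conn_of_hub (S : Set Cell) (h : Cell)
    (H : ∀ a ∈ S, Relation.ReflTransGen (fun x y : Cell => x ∈ S ∧ y ∈ S ∧ CellAdj x y) a h) :
    ConnectedIn S := by
  intro a ha b hb
  refine (H a ha).trans ?_
  have hsym : Symmetric (fun x y : Cell => x ∈ S ∧ y ∈ S ∧ CellAdj x y) := by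
    rintro x y ⟨hx, hy, hxy⟩
    exact ⟨hy, hx, cellAdj_symm_s4 hxy⟩
  exact (@Relation.ReflTransGen.stdSymm _ _ ⟨hsym⟩).symm _ _ (H b hb)

lemma whiteB1 : wbBoard.whitePart (wireRow 0 ∪ wireRow 1) =
    {((0:ℤ),(0:ℤ)), ((0:ℤ),(1:ℤ))} := by
  ext ⟨x, y⟩
  simp [Board.whitePart, wireRow, wbBoard, Prod.ext_iff]
  omega

lemma grayB1 : wbBoard.grayPart (wireRow 0 ∪ wireRow 1) =
    {((1:ℤ),(0:ℤ)), ((1:ℤ),(1:ℤ))} := by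
  ext ⟨x, y⟩
  simp [Board.grayPart, wireRow, wbBoard, Prod.ext_iff]
  omega

lemma whiteB2 : wbBoard.whitePart (wireRow 2) = {((0:ℤ),(2:ℤ))} := by
  ext ⟨x, y⟩
  simp [Board.whitePart, wireRow, wbBoard, Prod.ext_iff]
  omega

lemma grayB2 : wbBoard.grayPart (wireRow 2) = {((1:ℤ),(2:ℤ))} := by
  ext ⟨x, y⟩
  simp [Board.grayPart, wireRow, wbBoard, Prod.ext_iff]
  omega

lemma conn_pair (x y : Cell) (h : CellAdj x y) : ConnectedIn {x, y} := by
  apply conn_of_hub _ x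
  rintro a (rfl | rfl)
  · exact Relation.ReflTransGen.refl
  · exact Relation.ReflTransGen.single ⟨by simp, by simp, cellAdj_symm_s4 h⟩

lemma adjH (x y : ℤ) : CellAdj (x, y) (x + 1, y) := by unfold CellAdj; simp
lemma adjV (x y : ℤ) : CellAdj (x, y) (x, y + 1) := by unfold CellAdj; simp

lemma translate_iso (u v : ℤ) : IsGridIsometry (fun p : Cell => (p.1 + u, p.2 + v)) := by
  refine ⟨1, 0, 0, 1, u, v, by ring, by ring, by ring, fun p => ?_⟩
  simp

lemma connB1 : ConnectedIn (wireRow 0 ∪ wireRow 1) := by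
  apply conn_of_hub _ ((0:ℤ), (0:ℤ))
  have m00 : ((0:ℤ),(0:ℤ)) ∈ wireRow 0 ∪ wireRow 1 := by simp [wireRow]
  have m10 : ((1:ℤ),(0:ℤ)) ∈ wireRow 0 ∪ wireRow 1 := by simp [wireRow]
  have m01 : ((0:ℤ),(1:ℤ)) ∈ wireRow 0 ∪ wireRow 1 := by simp [wireRow]
  have m11 : ((1:ℤ),(1:ℤ)) ∈ wireRow 0 ∪ wireRow 1 := by simp [wireRow]
  intro a ha
  simp only [wireRow, Set.mem_union, Set.mem_insert_iff, Set.mem_singleton_iff] at ha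
  rcases ha with (rfl | rfl) | (rfl | rfl)
  · exact Relation.ReflTransGen.refl
  · exact Relation.ReflTransGen.single ⟨m10, m00, cellAdj_symm_s4 (adjH 0 0)⟩
  · exact Relation.ReflTransGen.single ⟨m01, m00, cellAdj_symm_s4 (adjV 0 0)⟩
  · exact Relation.ReflTransGen.head ⟨m11, m10, cellAdj_symm_s4 (adjV 1 0)⟩
      (Relation.ReflTransGen.single ⟨m10, m00, cellAdj_symm_s4 (adjH 0 0)⟩)

lemma validB1 : ValidBlock wbBoard (wireRow 0 ∪ wireRow 1) := by
  refine ⟨?_, connB1, ?_, ?_, ?_, ?_, ?_, ?_⟩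
  · exact ((Set.finite_singleton _).insert _).union
      ((Set.finite_singleton _).insert _)
  · rw [whiteB1]; exact ⟨_, Set.mem_insert _ _⟩
  · rw [grayB1]; exact ⟨_, Set.mem_insert _ _⟩
  · rw [whiteB1]; exact conn_pair _ _ (adjV 0 0)
  · rw [grayB1]; exact conn_pair _ _ (adjV 1 0)
  · refine ⟨fun p => (p.1 + 1, p.2 + 0), translate_iso 1 0, ?_⟩
    rw [whiteB1, grayB1]
    simp [Set.image_insert_eq]
  · intro p hp n hn
    have hp2 : p.2 ≠ 2 := by
      rcases hp with hp | hp <;> simp [wireRow, Prod.ext_iff] at hp <;> omega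
    rw [wbBoard] at hn
    simp [hp2] at hn
    subst hn
    constructor
    · rw [whiteB1]; exact Set.ncard_pair (by decide)
    · rw [grayB1]; exact Set.ncard_pair (by decide)

lemma validB2 : ValidBlock wbBoard (wireRow 2) := by
  refine ⟨(Set.finite_singleton _).insert _, conn_pair _ _ (adjH 0 2),
    ?_, ?_, ?_, ?_, ?_, ?_⟩
  · rw [whiteB2]; exact ⟨_, rfl⟩
  · rw [grayB2]; exact ⟨_, rfl⟩
  · rw [whiteB2]; intro a ha b hb; simp at ha hb; subst ha; subst hb
    exact Relation.ReflTransGen.refl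
  · rw [grayB2]; intro a ha b hb; simp at ha hb; subst ha; subst hb
    exact Relation.ReflTransGen.refl
  · refine ⟨fun p => (p.1 + 1, p.2 + 0), translate_iso 1 0, ?_⟩
    rw [whiteB2, grayB2]; simp
  · intro p hp n hn
    have hp2 : p.2 = 2 := by
      simp [wireRow, Prod.ext_iff] at hp; omega
    rw [wbBoard] at hn
    simp [hp2] at hn

lemma disjB1B2 : Disjoint (wireRow 0 ∪ wireRow 1) (wireRow 2) := by
  rw [Set.disjoint_left]
  rintro ⟨x, y⟩ h1 h2
  simp [wireRow, Prod.ext_iff] at h1 h2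
  omega


/-- The wire boundary gadget admits a gadget solution covering its optional area and also
    one not covering its optional area; hence it does not enforce the wire's value. -/
theorem wire_boundary_not_enforcing :
    (∃ (area : Set Cell) (blocks : Set (Set Cell)),
        IsGadgetSolution wbGadget area blocks ∧ wireRow 2 ⊆ area) ∧
    (∃ (area : Set Cell) (blocks : Set (Set Cell)),
        IsGadgetSolution wbGadget area blocks ∧ Disjoint (wireRow 2) area) := by
  constructor
  · refine ⟨wireRow 0 ∪ wireRow 1 ∪ wireRow 2, {wireRow 0 ∪ wireRow 1, wireRow 2},
      ⟨?_, ?_, ?_, ?_, ?_, ?_⟩, ?_⟩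
    · exact fun p hp => Or.inl hp
    · rw [Gadget.area]; simp [wbGadget, Set.union_assoc]
    · intro O hO
      simp only [wbGadget, Set.mem_singleton_iff] at hO
      subst hO
      exact Or.inl fun p hp => Or.inr hp
    · rintro B (rfl | rfl)
      · exact validB1
      · exact validB2
    · rintro B (rfl | rfl) C (rfl | rfl) hBC
      · exact absurd rfl hBC
      · exact disjB1B2
      · exact disjB1B2.symm
      · exact absurd rfl hBC
    · rw [Set.sUnion_pair]
    · exact fun p hp => Or.inr hp
  · refine ⟨wireRow 0 ∪ wireRow 1, {wireRow 0 ∪ wireRow 1},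
      ⟨?_, ?_, ?_, ?_, ?_, ?_⟩, disjB1B2.symm⟩
    · exact fun p hp => hp
    · exact fun p hp => Or.inl hp
    · intro O hO
      simp only [wbGadget, Set.mem_singleton_iff] at hO
      subst hO
      exact Or.inr disjB1B2.symm
    · rintro B rfl; exact validB1
    · exact Set.pairwiseDisjoint_singleton _ _
    · exact Set.sUnion_singleton _
end
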